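/- Mixed Helly theorem: let d, k ≥ 0 and let F be a finite family of convex subsets of ℝ^{d+k} of cardinality at least (d+1)·2^k. If every (d+1)·2^k members of F have a common point whose last k coordinates are integers, then all members of F have a common point whose last k coordinates are integers. -/

import Mathlib

open Set

/-- A vector in `ℝ^k` has all coordinates integer. -/
def IsIntVec {k : ℕ} (p : Fin k → ℝ) : Prop := ∀ j, ∃ n : ℤ, p j = (n : ℝ)

/-- The set of integer vectors in a bounded set is finite. -/
lemma isIntVec_finite_of_bounded {k : ℕ} {K : Set (Fin k → ℝ)}
    (hK : Bornology.IsBounded K) : {p | p ∈ K ∧ IsIntVec p}.Finite := by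
  obtain ⟨R, hR⟩ := hK.exists_norm_le
  have hT : (Set.pi (univ : Set (Fin k)) fun _ => Set.Icc (-⌈R⌉) ⌈R⌉ :
      Set (Fin k → ℤ)).Finite := Set.Finite.pi fun _ => Set.finite_Icc _ _
  refine ((hT.image (fun v : Fin k → ℤ => fun j => (v j : ℝ))).subset ?_)
  rintro p ⟨hpK, hpI⟩
  choose v hv using hpI
  refine ⟨v, ?_, by funext j; exact (hv j).symm⟩
  intro j _
  have h1 : |p j| ≤ R := by
    have := le_trans (norm_le_pi_norm p j) (hR p hpK)
    rwa [Real.norm_eq_abs] at this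
  have h2 : |(v j : ℝ)| ≤ R := by rwa [hv j] at h1
  have h3 : ((|v j| : ℤ) : ℝ) ≤ ((⌈R⌉ : ℤ) : ℝ) := by
    push_cast
    exact le_trans h2 (Int.le_ceil R)
  have h4 : |v j| ≤ ⌈R⌉ := by exact_mod_cast h3
  exact Set.mem_Icc.mpr (abs_le.mp h4)

/-- Key convexity computation: if `t = lam•x + lb•v` with `lam < 1` and
`x = mu•t + b•u` with `v, u` in a convex set `s`, then `x ∈ s`. -/
lemma key_combo {E : Type*} [AddCommGroup E] [Module ℝ E] {s : Set E} (hs : Convex ℝ s)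
    {x t v u : E} {lam lb mu b : ℝ}
    (ht : t = lam • x + lb • v) (hx : x = mu • t + b • u)
    (hlam0 : 0 ≤ lam) (hlam1 : lam < 1) (hlb : 0 ≤ lb) (hsum1 : lam + lb = 1)
    (hmu : 0 ≤ mu) (hb : 0 ≤ b) (hsum2 : mu + b = 1)
    (hv : v ∈ s) (hu : u ∈ s) : x ∈ s := by
  have hmu1 : mu ≤ 1 := by linarith
  have hc : (0:ℝ) < 1 - mu * lam := by nlinarith
  have h1 : (1 - mu * lam) • x = (mu * lb) • v + b • u := by
    have h0 : x = mu • (lam • x + lb • v) + b • u := by rw [← ht]; exact hx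
    rw [smul_add, smul_smul, smul_smul] at h0
    linear_combination (norm := module) h0
  have hxeq : x = ((1 - mu*lam)⁻¹ * (mu * lb)) • v + ((1 - mu*lam)⁻¹ * b) • u := by
    have := congrArg (fun w => (1 - mu*lam)⁻¹ • w) h1
    simp only [smul_add, smul_smul] at this
    rwa [inv_mul_cancel₀ hc.ne', one_smul] at this
  rw [hxeq]
  refine hs hv hu (by positivity) (by positivity) ?_
  rw [← mul_add]
  have hmb : mu * lb + b = 1 - mu * lam := by linear_combination mu * hsum1 + hsum2
  rw [hmb, inv_mul_cancel₀ hc.ne']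

/-- Decomposition of a point of `convexHull (insert x A)`. -/
lemma hull_insert_decomp {E : Type*} [AddCommGroup E] [Module ℝ E] {A : Set E}
    (hA : A.Nonempty) {x p : E} (hp : p ∈ convexHull ℝ (insert x A)) :
    ∃ (a b : ℝ) (u : E), u ∈ convexHull ℝ A ∧ 0 ≤ a ∧ 0 ≤ b ∧ a + b = 1 ∧
      p = a • x + b • u := by
  rw [convexHull_insert hA, mem_convexJoin] at hp
  obtain ⟨y, hy, u, hu, hseg⟩ := hp
  rw [mem_singleton_iff] at hy
  subst hy
  obtain ⟨a, b, ha, hb, hab, habp⟩ := hseg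
  exact ⟨a, b, u, hu, ha, hb, hab, habp.symm⟩

section Pure

variable {k : ℕ} {ι : Type} [Fintype ι] [DecidableEq ι]

/-- member of hull of punctured image -/
lemma mem_hull_compl (Y : ι → Fin k → ℝ) {l c : ι} (hlc : l ≠ c) :
    Y l ∈ convexHull ℝ (Y '' {c}ᶜ) :=
  subset_convexHull ℝ _ ⟨l, by simpa using hlc, rfl⟩

lemma pure_aux (k : ℕ) (ι : Type) [Fintype ι] [DecidableEq ι]
    (hcard : 2 ^ k < Fintype.card ι) (hcard3 : 3 ≤ Fintype.card ι) :
    ∀ N : ℕ, ∀ Y : ι → Fin k → ℝ, (∀ c, IsIntVec (Y c)) →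
      ({p | p ∈ convexHull ℝ (Set.range Y) ∧ IsIntVec p}).ncard ≤ N →
      ∃ t, IsIntVec t ∧ ∀ c, t ∈ convexHull ℝ (Y '' {c}ᶜ) := by
  intro N
  induction N with
  | zero =>
    intro Y hYint hN
    exfalso
    obtain ⟨c₀⟩ : Nonempty ι := Fintype.card_pos_iff.mp (by omega)
    have hSfin : ({p | p ∈ convexHull ℝ (Set.range Y) ∧ IsIntVec p}).Finite :=
      isIntVec_finite_of_bounded (isBounded_convexHull.mpr (Set.finite_range Y).isBounded)
    have hmem : Y c₀ ∈ {p | p ∈ convexHull ℝ (Set.range Y) ∧ IsIntVec p} :=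
      ⟨subset_convexHull ℝ _ ⟨c₀, rfl⟩, hYint c₀⟩
    have := (Set.ncard_pos hSfin).mpr ⟨_, hmem⟩
    omega
  | succ N ih =>
    intro Y hYint hN
    by_cases hcase : ∃ c, Y c ∈ convexHull ℝ (Y '' {c}ᶜ)
    · obtain ⟨c, hc⟩ := hcase
      refine ⟨Y c, hYint c, fun l => ?_⟩
      by_cases hlc : l = c
      · subst hlc; exact hc
      · exact mem_hull_compl Y (fun he => hlc he.symm)
    · push_neg at hcase
      -- integer coordinates
      have hYint2 := hYint
      choose a ha using hYint2
      -- pigeonhole modulo 2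
      obtain ⟨i, j, hij, hpar⟩ := Fintype.exists_ne_map_eq_of_card_lt
        (fun c => (fun jj => ((a c jj : ZMod 2)) : Fin k → ZMod 2))
        (by simpa [Fintype.card_fun, ZMod.card] using hcard)
      -- the midpoint z
      set z : Fin k → ℝ := fun jj => (Y i jj + Y j jj) / 2 with hzdef
      have hzint : IsIntVec z := by
        intro jj
        have hc2 : ((a i jj : ZMod 2)) = ((a j jj : ZMod 2)) := congrFun hpar jj
        have hdvd : (2 : ℤ) ∣ a j jj - a i jj :=
          Int.ModEq.dvd ((ZMod.intCast_eq_intCast_iff _ _ _).mp hc2)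
        obtain ⟨dd, hdd⟩ := hdvd
        refine ⟨a i jj + dd, ?_⟩
        have h5 : (a j jj : ℝ) = (a i jj : ℝ) + 2 * dd := by
          have h6 : ((a j jj - a i jj : ℤ) : ℝ) = ((2 * dd : ℤ) : ℝ) := by rw [hdd]
          push_cast at h6
          linarith
        show (Y i jj + Y j jj) / 2 = ((a i jj + dd : ℤ) : ℝ)
        rw [ha i jj, ha j jj, h5]
        push_cast
        ring
      have hYij : Y i ≠ Y j := by
        intro he
        exact hcase i (he ▸ mem_hull_compl Y (fun hji => hij hji.symm) : Y i ∈ _)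
      have hz_eq : z = (1/2 : ℝ) • Y i + (1/2 : ℝ) • Y j := by
        funext jj; simp [hzdef]; ring
      have hz_eq' : z = (1/2 : ℝ) • Y j + (1/2 : ℝ) • Y i := by
        rw [hz_eq, add_comm]
      have hzmem : ∀ c, c ≠ i → c ≠ j → z ∈ convexHull ℝ (Y '' {c}ᶜ) := by
        intro c hci hcj
        rw [hz_eq]
        exact (convex_convexHull ℝ _) (mem_hull_compl Y (fun h => hci h.symm))
          (mem_hull_compl Y (fun h => hcj h.symm)) (by norm_num) (by norm_num) (by norm_num)
      have hzrange : z ∈ convexHull ℝ (Set.range Y) := by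
        rw [hz_eq]
        exact (convex_convexHull ℝ _) (subset_convexHull ℝ _ (Set.mem_range_self i))
          (subset_convexHull ℝ _ (Set.mem_range_self j)) (by norm_num) (by norm_num) (by norm_num)
      set Y' : ι → Fin k → ℝ := Function.update Y i z with hY'def
      have hY'i : Y' i = z := by simp [hY'def]
      have hY'ne : ∀ c, c ≠ i → Y' c = Y c := fun c hc => Function.update_of_ne hc z Y
      have hY'int : ∀ c, IsIntVec (Y' c) := by
        intro c
        by_cases hci : c = i
        · subst hci; rw [hY'i]; exact hzint
        · rw [hY'ne c hci]; exact hYint c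
      have himA : Y' '' {i}ᶜ = Y '' {i}ᶜ :=
        Set.image_congr fun l hl => hY'ne l (by simpa using hl)
      have hrangesub : Set.range Y' ⊆ insert z (Y '' {i}ᶜ) := by
        rintro p ⟨l, rfl⟩
        by_cases hli : l = i
        · subst hli; rw [hY'i]; exact mem_insert _ _
        · rw [hY'ne l hli]; exact mem_insert_of_mem _ ⟨l, by simpa using hli, rfl⟩
      have hAne : (Y '' {i}ᶜ).Nonempty := ⟨Y j, ⟨j, by simpa using hij.symm, rfl⟩⟩
      have hYi_not : Y i ∉ convexHull ℝ (Set.range Y') := by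
        intro hmem
        have hmem' : Y i ∈ convexHull ℝ (insert z (Y '' {i}ᶜ)) :=
          convexHull_mono hrangesub hmem
        obtain ⟨mu, b, u, hu, hmu, hb, hsum, hxeq⟩ := hull_insert_decomp hAne hmem'
        exact hcase i (key_combo (convex_convexHull ℝ _) hz_eq hxeq (by norm_num) (by norm_num)
          (by norm_num) (by norm_num) hmu hb hsum
          (mem_hull_compl Y (fun h => hij h.symm)) hu)
      have hrangehull : convexHull ℝ (Set.range Y') ⊆ convexHull ℝ (Set.range Y) := by
        refine convexHull_min ?_ (convex_convexHull ℝ _)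
        rintro p ⟨l, rfl⟩
        by_cases hli : l = i
        · subst hli; rw [hY'i]; exact hzrange
        · rw [hY'ne l hli]; exact subset_convexHull ℝ _ (Set.mem_range_self l)
      have hSfin : ({p | p ∈ convexHull ℝ (Set.range Y) ∧ IsIntVec p}).Finite :=
        isIntVec_finite_of_bounded (isBounded_convexHull.mpr (Set.finite_range Y).isBounded)
      have hssub : {p | p ∈ convexHull ℝ (Set.range Y') ∧ IsIntVec p} ⊂
          {p | p ∈ convexHull ℝ (Set.range Y) ∧ IsIntVec p} := by
        have hsubset1 : {p | p ∈ convexHull ℝ (Set.range Y') ∧ IsIntVec p} ⊆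
            {p | p ∈ convexHull ℝ (Set.range Y) ∧ IsIntVec p} := by
          rintro p ⟨h1, h2⟩
          exact ⟨hrangehull h1, h2⟩
        rw [Set.ssubset_iff_of_subset hsubset1]
        refine ⟨Y i, ?_, ?_⟩
        · simp only [Set.mem_setOf_eq]
          exact ⟨subset_convexHull ℝ _ (Set.mem_range_self i), hYint i⟩
        · simp only [Set.mem_setOf_eq, not_and]
          exact fun hp _ => hYi_not hp
      have hN' : ({p | p ∈ convexHull ℝ (Set.range Y') ∧ IsIntVec p}).ncard ≤ N := by
        have := Set.ncard_lt_ncard hssub hSfin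
        omega
      obtain ⟨t, htint, ht⟩ := ih Y' hY'int hN'
      have hT1 : ∀ c, c ≠ j → t ∈ convexHull ℝ (Y '' {c}ᶜ) := by
        intro c hcj
        by_cases hci : c = i
        · rw [hci]
          have h0 := ht i
          rwa [himA] at h0
        · refine convexHull_min ?_ (convex_convexHull ℝ _) (ht c)
          rintro p ⟨l, hl, rfl⟩
          have hlc : l ≠ c := by simpa using hl
          by_cases hli : l = i
          · subst hli; rw [hY'i]; exact hzmem c hci hcj
          · rw [hY'ne l hli]; exact mem_hull_compl Y hlc
      by_cases htj : t ∈ convexHull ℝ (Y '' {j}ᶜ)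
      · refine ⟨t, htint, fun c => ?_⟩
        by_cases hcj : c = j
        · subst hcj; exact htj
        · exact hT1 c hcj
      · -- second descent
        have hBne : ∃ c₀, c₀ ≠ i ∧ c₀ ≠ j := by
          have h2 : ({i, j} : Finset ι).card ≤ 2 := by
            apply le_trans (Finset.card_insert_le _ _)
            simp
          have h3 : (Finset.univ \ {i, j} : Finset ι).card + ({i, j} : Finset ι).card
              = (Finset.univ ∪ {i, j} : Finset ι).card := Finset.card_sdiff_add_card _ _
          have h5 : (Finset.univ ∪ {i, j} : Finset ι) = Finset.univ := by simp
          rw [h5, Finset.card_univ] at h3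
          have h4 : (Finset.univ \ {i, j} : Finset ι).Nonempty := by
            rw [← Finset.card_pos]
            omega
          obtain ⟨c₀, hc₀⟩ := h4
          simp only [Finset.mem_sdiff, Finset.mem_univ, Finset.mem_insert,
            Finset.mem_singleton, true_and] at hc₀
          push_neg at hc₀
          exact ⟨c₀, hc₀.1, hc₀.2⟩
        obtain ⟨c₀, hc₀i, hc₀j⟩ := hBne
        have hB'ne : (Y '' ({i}ᶜ ∩ {j}ᶜ)).Nonempty :=
          ⟨Y c₀, ⟨c₀, ⟨by simpa using hc₀i, by simpa using hc₀j⟩, rfl⟩⟩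
        have htYj : t ≠ Y j := by
          intro he
          have hsubJ : Y' '' {j}ᶜ ⊆ insert z (Y '' ({i}ᶜ ∩ {j}ᶜ)) := by
            rintro p ⟨l, hl, rfl⟩
            have hlj : l ≠ j := by simpa using hl
            by_cases hli : l = i
            · subst hli; rw [hY'i]; exact mem_insert _ _
            · rw [hY'ne l hli]
              exact mem_insert_of_mem _ ⟨l, ⟨by simpa using hli, by simpa using hlj⟩, rfl⟩
          have h2 : Y j ∈ convexHull ℝ (insert z (Y '' ({i}ᶜ ∩ {j}ᶜ))) := by
            rw [← he]; exact convexHull_mono hsubJ (ht j)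
          obtain ⟨mu, b, u, hu, hmu, hb, hsum, hxeq⟩ := hull_insert_decomp hB'ne h2
          have husub : u ∈ convexHull ℝ (Y '' {j}ᶜ) :=
            convexHull_mono (Set.image_mono Set.inter_subset_right) hu
          exact hcase j (key_combo (convex_convexHull ℝ _) hz_eq' hxeq (by norm_num)
            (by norm_num) (by norm_num) (by norm_num) hmu hb hsum
            (mem_hull_compl Y hij) husub)
        have htrange : t ∈ convexHull ℝ (Set.range Y) :=
          convexHull_mono (Set.image_subset_range _ _) (hT1 i hij)
        have hrangeeq : Set.range Y = insert (Y j) (Y '' {j}ᶜ) := by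
          apply Set.Subset.antisymm
          · rintro p ⟨l, rfl⟩
            by_cases hlj : l = j
            · subst hlj; exact mem_insert _ _
            · exact mem_insert_of_mem _ ⟨l, by simpa using hlj, rfl⟩
          · rintro p hp
            rw [Set.mem_insert_iff] at hp
            rcases hp with rfl | ⟨l, _, rfl⟩
            · exact Set.mem_range_self j
            · exact Set.mem_range_self l
        have hjne : (Y '' {j}ᶜ).Nonempty := ⟨Y i, ⟨i, by simpa using hij, rfl⟩⟩
        obtain ⟨lam, lb, v, hv, hlam, hlb, hlamlb, hteq⟩ :=
          hull_insert_decomp hjne (show t ∈ convexHull ℝ (insert (Y j) (Y '' {j}ᶜ)) by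
            rw [← hrangeeq]; exact htrange)
        have hlam1 : lam < 1 := by
          rcases lt_or_eq_of_le (show lam ≤ 1 by linarith) with h | h
          · exact h
          · exfalso
            apply htYj
            have hlb0 : lb = 0 := by linarith
            rw [hteq, h, hlb0, one_smul, zero_smul, add_zero]
        set Y'' : ι → Fin k → ℝ := Function.update Y j t with hY''def
        have hY''j : Y'' j = t := by simp [hY''def]
        have hY''ne : ∀ c, c ≠ j → Y'' c = Y c := fun c hc => Function.update_of_ne hc t Y
        have hY''int : ∀ c, IsIntVec (Y'' c) := by
          intro c
          by_cases hcj : c = j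
          · subst hcj; rw [hY''j]; exact htint
          · rw [hY''ne c hcj]; exact hYint c
        have hrangesub2 : Set.range Y'' ⊆ insert t (Y '' {j}ᶜ) := by
          rintro p ⟨l, rfl⟩
          by_cases hlj : l = j
          · subst hlj; rw [hY''j]; exact mem_insert _ _
          · rw [hY''ne l hlj]; exact mem_insert_of_mem _ ⟨l, by simpa using hlj, rfl⟩
        have hYj_not : Y j ∉ convexHull ℝ (Set.range Y'') := by
          intro hmem
          obtain ⟨mu, b, u, hu, hmu, hb, hsum, hxeq⟩ :=
            hull_insert_decomp hjne (convexHull_mono hrangesub2 hmem)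
          exact hcase j (key_combo (convex_convexHull ℝ _) hteq hxeq hlam hlam1 hlb hlamlb
            hmu hb hsum hv hu)
        have hrangehull2 : convexHull ℝ (Set.range Y'') ⊆ convexHull ℝ (Set.range Y) := by
          refine convexHull_min ?_ (convex_convexHull ℝ _)
          rintro p ⟨l, rfl⟩
          by_cases hlj : l = j
          · subst hlj; rw [hY''j]; exact htrange
          · rw [hY''ne l hlj]; exact subset_convexHull ℝ _ (Set.mem_range_self l)
        have hssub2 : {p | p ∈ convexHull ℝ (Set.range Y'') ∧ IsIntVec p} ⊂
            {p | p ∈ convexHull ℝ (Set.range Y) ∧ IsIntVec p} := by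
          have hsubset2 : {p | p ∈ convexHull ℝ (Set.range Y'') ∧ IsIntVec p} ⊆
              {p | p ∈ convexHull ℝ (Set.range Y) ∧ IsIntVec p} := by
            rintro p ⟨h1, h2⟩
            exact ⟨hrangehull2 h1, h2⟩
          rw [Set.ssubset_iff_of_subset hsubset2]
          refine ⟨Y j, ?_, ?_⟩
          · simp only [Set.mem_setOf_eq]
            exact ⟨subset_convexHull ℝ _ (Set.mem_range_self j), hYint j⟩
          · simp only [Set.mem_setOf_eq, not_and]
            exact fun hp _ => hYj_not hp
        have hN'' : ({p | p ∈ convexHull ℝ (Set.range Y'') ∧ IsIntVec p}).ncard ≤ N := by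
          have := Set.ncard_lt_ncard hssub2 hSfin
          omega
        obtain ⟨t2, ht2int, ht2⟩ := ih Y'' hY''int hN''
        refine ⟨t2, ht2int, fun c => ?_⟩
        by_cases hcj : c = j
        · rw [hcj]
          have h0 := ht2 j
          rwa [Set.image_congr (fun l hl => hY''ne l (by simpa using hl))] at h0
        · refine convexHull_min ?_ (convex_convexHull ℝ _) (ht2 c)
          rintro p ⟨l, hl, rfl⟩
          have hlc : l ≠ c := by simpa using hl
          by_cases hlj : l = j
          · subst hlj; rw [hY''j]; exact hT1 c hcj
          · rw [hY''ne l hlj]; exact mem_hull_compl Y hlc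

theorem pure_doignon (k : ℕ) (ι : Type) [Fintype ι] [DecidableEq ι]
    (hcard : 2 ^ k < Fintype.card ι) (Y : ι → Fin k → ℝ) (hY : ∀ c, IsIntVec (Y c)) :
    ∃ t, IsIntVec t ∧ ∀ c, t ∈ convexHull ℝ (Y '' {c}ᶜ) := by
  rcases Nat.eq_zero_or_pos k with hk | hk
  · subst hk
    have hne : Nonempty ι := Fintype.card_pos_iff.mp (by omega)
    obtain ⟨c₁⟩ := hne
    refine ⟨Y c₁, hY c₁, fun c => ?_⟩
    obtain ⟨l, hl⟩ := Fintype.exists_ne_of_one_lt_card (by omega) c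
    have heq : Y c₁ = Y l := funext fun j => j.elim0
    rw [heq]
    exact mem_hull_compl Y hl
  · have hcard3 : 3 ≤ Fintype.card ι := by
      have h2 : 2 ≤ 2 ^ k := by
        calc 2 = 2 ^ 1 := by norm_num
        _ ≤ 2 ^ k := Nat.pow_le_pow_right (by norm_num) hk
      omega
    exact pure_aux k ι hcard hcard3 _ Y hY le_rfl

theorem doignon_aux (k : ℕ) : ∀ (n : ℕ) (ι : Type) [Fintype ι],
    Fintype.card ι ≤ n →
    ∀ (D : ι → Set (Fin k → ℝ)), (∀ i, Convex ℝ (D i)) →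
    (∀ G : Finset ι, G.card ≤ 2 ^ k → ∃ p, IsIntVec p ∧ ∀ i ∈ G, p ∈ D i) →
    ∃ p, IsIntVec p ∧ ∀ i, p ∈ D i := by
  intro n
  induction n with
  | zero =>
    intro ι instF hcard D hconv h
    obtain ⟨p, hp, _⟩ := h ∅ (by simp)
    refine ⟨p, hp, fun i => ?_⟩
    exfalso
    have : 0 < Fintype.card ι := @Fintype.card_pos ι instF ⟨i⟩
    omega
  | succ n ih =>
    intro ι instF hcard D hconv h
    classical
    by_cases hsmall : Fintype.card ι ≤ 2 ^ k
    · obtain ⟨p, hp1, hp2⟩ := h Finset.univ (by rw [Finset.card_univ]; exact hsmall)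
      exact ⟨p, hp1, fun i => hp2 i (Finset.mem_univ i)⟩
    · push_neg at hsmall
      have hwit : ∀ c : ι, ∃ y, IsIntVec y ∧ ∀ i, i ≠ c → y ∈ D i := by
        intro c
        have h1 : Fintype.card {i : ι // i ≠ c} = Fintype.card ι - 1 := by
          have h2 := Fintype.card_subtype_compl (fun i : ι => i = c)
          rw [Fintype.card_subtype_eq] at h2
          simpa using h2
        have hcaat : Fintype.card {i : ι // i ≠ c} ≤ n := by
          have : 0 < Fintype.card ι := @Fintype.card_pos ι instF ⟨c⟩
          omega
        obtain ⟨p, hp1, hp2⟩ := ih {i : ι // i ≠ c} hcaat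
          (fun i' => D i'.1) (fun i' => hconv i'.1)
          (fun G' hG' => by
            obtain ⟨p, hp1, hp2⟩ := h (G'.map (Function.Embedding.subtype _))
              (by rw [Finset.card_map]; exact hG')
            exact ⟨p, hp1, fun i' hi' => hp2 i'.1 (Finset.mem_map_of_mem _ hi')⟩)
        exact ⟨p, hp1, fun i hi => hp2 ⟨i, hi⟩⟩
      choose y hy1 hy2 using hwit
      obtain ⟨t, ht1, ht2⟩ := pure_doignon k ι hsmall y hy1
      refine ⟨t, ht1, fun c => ?_⟩
      refine convexHull_min ?_ (hconv c) (ht2 c)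
      rintro p ⟨l, hl, rfl⟩
      exact hy2 l c (Ne.symm (by simpa using hl))

/-- Mixed Helly theorem: if every `(d+1)·2^k` members of a finite family of at least
`(d+1)·2^k` convex sets in `ℝ^{d+k} = ℝ^d × ℝ^k` have a common point whose last `k`
coordinates are integers, then all members have such a common point. -/
theorem mixed_helly (d k : ℕ) {ι : Type} [Fintype ι]
    (F : ι → Set ((Fin d → ℝ) × (Fin k → ℝ)))
    (hcard : (d + 1) * 2 ^ k ≤ Fintype.card ι)
    (hconv : ∀ i, Convex ℝ (F i))
    (h : ∀ G : Finset ι, G.card = (d + 1) * 2 ^ k →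
      ∃ p : (Fin d → ℝ) × (Fin k → ℝ), (∀ j, ∃ m : ℤ, p.2 j = (m : ℝ)) ∧ ∀ i ∈ G, p ∈ F i) :
    ∃ p : (Fin d → ℝ) × (Fin k → ℝ), (∀ j, ∃ m : ℤ, p.2 j = (m : ℝ)) ∧ ∀ i, p ∈ F i := by
  classical
  have hd1 : d + 1 ≤ Fintype.card ι := by
    refine le_trans ?_ hcard
    calc d + 1 = (d + 1) * 1 := by ring
    _ ≤ (d + 1) * 2 ^ k := Nat.mul_le_mul_left _ Nat.one_le_two_pow
  let σ := {S : Finset ι // S.card = d + 1}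
  let D : σ → Set (Fin k → ℝ) := fun S => Prod.snd '' (⋂ i ∈ S.1, F i)
  have hDconv : ∀ S, Convex ℝ (D S) := by
    intro S
    have h1 : Convex ℝ (⋂ i ∈ S.1, F i) :=
      convex_iInter fun i => convex_iInter fun _ => hconv i
    have h2 := h1.linear_image (LinearMap.snd ℝ (Fin d → ℝ) (Fin k → ℝ))
    simpa using h2
  have hD : ∀ G : Finset σ, G.card ≤ 2 ^ k → ∃ u, IsIntVec u ∧ ∀ S ∈ G, u ∈ D S := by
    intro G hG
    set U : Finset ι := G.biUnion (fun S => S.1) with hU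
    have hUcard : U.card ≤ (d + 1) * 2 ^ k := by
      calc U.card ≤ ∑ S ∈ G, S.1.card := Finset.card_biUnion_le
      _ = ∑ S ∈ G, (d + 1) := Finset.sum_congr rfl (fun S _ => S.2)
      _ = G.card * (d + 1) := by rw [Finset.sum_const, smul_eq_mul]
      _ ≤ 2 ^ k * (d + 1) := Nat.mul_le_mul_right _ hG
      _ = (d + 1) * 2 ^ k := Nat.mul_comm _ _
    obtain ⟨W, hUW, hWcard⟩ := Finset.exists_superset_card_eq hUcard hcard
    obtain ⟨p, hp1, hp2⟩ := h W hWcard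
    refine ⟨p.2, hp1, fun S hS => ?_⟩
    refine ⟨p, ?_, rfl⟩
    refine Set.mem_iInter₂.mpr fun i hi => hp2 i (hUW ?_)
    exact Finset.mem_biUnion.mpr ⟨S, hS, hi⟩
  obtain ⟨u, hu1, hu2⟩ := doignon_aux k (Fintype.card σ) σ le_rfl D hDconv hD
  let Gf : ι → Set (Fin d → ℝ) := fun i => {v | (v, u) ∈ F i}
  have hGconv : ∀ i, Convex ℝ (Gf i) := by
    intro i x hx y hy a b ha hb hab
    have h2 := hconv i hx hy ha hb hab
    have heq : a • ((x, u) : (Fin d → ℝ) × (Fin k → ℝ)) + b • ((y, u) : (Fin d → ℝ) × (Fin k → ℝ))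
        = (a • x + b • y, u) := by
      rw [Prod.smul_mk, Prod.smul_mk, Prod.mk_add_mk]
      congr 1
      rw [← add_smul, hab, one_smul]
    rw [heq] at h2
    exact h2
  have hfinrank : Module.finrank ℝ (Fin d → ℝ) = d := by simp
  have hHelly : (⋂ i ∈ (Finset.univ : Finset ι), Gf i).Nonempty := by
    apply Convex.helly_theorem' (𝕜 := ℝ) (fun i _ => hGconv i)
    intro I _ hIcard
    rw [hfinrank] at hIcard
    obtain ⟨J, hIJ, _, hJcard⟩ := Finset.exists_subsuperset_card_eq (Finset.subset_univ I)
      hIcard (by rw [Finset.card_univ]; exact hd1)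
    have hJ : u ∈ D ⟨J, hJcard⟩ := hu2 ⟨J, hJcard⟩
    obtain ⟨q, hq, hq2⟩ := hJ
    refine ⟨q.1, ?_⟩
    refine Set.mem_iInter₂.mpr fun i hi => ?_
    have hqF : q ∈ F i := Set.mem_iInter₂.mp hq i (hIJ hi)
    show (q.1, u) ∈ F i
    rw [← hq2]
    simpa using hqF
  obtain ⟨v, hv⟩ := hHelly
  refine ⟨(v, u), hu1, fun i => ?_⟩
  exact Set.mem_iInter₂.mp hv i (Finset.mem_univ i)
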